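/- lim_{s → ∞} ∫_0^∞ 2·(y(u/√s) + y(-u/√s))·e^{-u²} du = √(2π), where y(v) = v/f(v) for v ≠ 0, y(0) = √2/2, and f is the inverse of x ↦ sgn(x)·√(x - ln(1+x)). -/

import Mathlib

open Real Set Filter Topology

lemma hdA {x : ℝ} (hx : -1 < x) :
    HasDerivAt (fun x : ℝ => Real.log (1+x) - x + x^2/2) (x^2/(1+x)) x := by
  have h1 : (0:ℝ) < 1 + x := by linarith
  have hlog : HasDerivAt (fun x : ℝ => Real.log (1+x)) (1/(1+x)) x := by
    simpa using ((hasDerivAt_id x).const_add 1).log (ne_of_gt h1)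
  have hx2 : HasDerivAt (fun x : ℝ => x^2/2) x x := by
    simpa using (hasDerivAt_pow 2 x).div_const 2
  have h := (hlog.sub (hasDerivAt_id x)).add hx2
  refine h.congr_deriv ?_
  field_simp
  ring

lemma hdB {x : ℝ} (hx : -1 < x) :
    HasDerivAt (fun x : ℝ => x - Real.log (1+x) - x^2/(2*(1+x))) (x^2/(2*(1+x)^2)) x := by
  have h1 : (0:ℝ) < 1 + x := by linarith
  have hlog : HasDerivAt (fun x : ℝ => Real.log (1+x)) (1/(1+x)) x := by
    simpa using ((hasDerivAt_id x).const_add 1).log (ne_of_gt h1)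
  have hden : HasDerivAt (fun x : ℝ => 2*(1+x)) 2 x := by
    simpa using ((hasDerivAt_id x).const_add 1).const_mul 2
  have hq : HasDerivAt (fun x : ℝ => x^2/(2*(1+x)))
      ((2*x^1*(2*(1+x)) - x^2*2)/(2*(1+x))^2) x :=
    (hasDerivAt_pow 2 x).div hden (by positivity)
  have h := ((hasDerivAt_id x).sub hlog).sub hq
  refine h.congr_deriv ?_
  field_simp
  ring

lemma monoA : MonotoneOn (fun x : ℝ => Real.log (1+x) - x + x^2/2) (Set.Ioi (-1:ℝ)) := by
  apply monotoneOn_of_deriv_nonneg (convex_Ioi _)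
  · exact fun x hx => ((hdA hx).differentiableAt.continuousAt).continuousWithinAt
  · intro x hx
    rw [interior_Ioi] at hx
    exact (hdA hx).differentiableAt.differentiableWithinAt
  · intro x hx
    rw [interior_Ioi] at hx
    rw [(hdA hx).deriv]
    have : (0:ℝ) < 1 + x := by linarith [mem_Ioi.mp hx]
    positivity

lemma monoB : MonotoneOn (fun x : ℝ => x - Real.log (1+x) - x^2/(2*(1+x))) (Set.Ioi (-1:ℝ)) := by
  apply monotoneOn_of_deriv_nonneg (convex_Ioi _)
  · exact fun x hx => ((hdB hx).differentiableAt.continuousAt).continuousWithinAt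
  · intro x hx
    rw [interior_Ioi] at hx
    exact (hdB hx).differentiableAt.differentiableWithinAt
  · intro x hx
    rw [interior_Ioi] at hx
    rw [(hdB hx).deriv]
    positivity

section
variable {f : ℝ → ℝ}
  (hf : ∀ u : ℝ, f u ∈ Set.Ioi (-1 : ℝ) ∧
      Real.sign (f u) * Real.sqrt (f u - Real.log (1 + f u)) = u)

include hf

lemma f_pos_facts (ineq2 : ∀ x : ℝ, 0 ≤ x → x^2/(2*(1+x)) ≤ x - Real.log (1+x))
    {v : ℝ} (hv : 0 < v) :
    0 < f v ∧ f v - Real.log (1 + f v) = v^2 := by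
  obtain ⟨h1, h2⟩ := hf v
  have hpos : 0 < f v := by
    rcases lt_trichotomy (f v) 0 with h | h | h
    · exfalso
      rw [Real.sign_of_neg h] at h2
      nlinarith [Real.sqrt_nonneg (f v - Real.log (1 + f v))]
    · exfalso
      rw [h] at h2
      simp [Real.sign_zero] at h2
      linarith
    · exact h
  rw [Real.sign_of_pos hpos, one_mul] at h2
  have h3 : 0 < 1 + f v := by linarith
  have hnn : 0 ≤ f v - Real.log (1 + f v) := by
    have := ineq2 (f v) hpos.le
    have h4 : 0 < f v^2/(2*(1+f v)) := by positivity
    linarith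
  have := Real.sq_sqrt hnn
  rw [h2] at this
  exact ⟨hpos, this.symm⟩

lemma f_neg_facts (ineq3 : ∀ x : ℝ, -1 < x → x ≤ 0 → x^2/2 ≤ x - Real.log (1+x))
    {v : ℝ} (hv : v < 0) :
    f v < 0 ∧ f v - Real.log (1 + f v) = v^2 := by
  obtain ⟨h1, h2⟩ := hf v
  rw [Set.mem_Ioi] at h1
  have hneg : f v < 0 := by
    rcases lt_trichotomy (f v) 0 with h | h | h
    · exact h
    · exfalso; rw [h] at h2; simp [Real.sign_zero] at h2; linarith
    · exfalso
      rw [Real.sign_of_pos h] at h2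
      nlinarith [Real.sqrt_nonneg (f v - Real.log (1 + f v))]
  rw [Real.sign_of_neg hneg, neg_one_mul] at h2
  have h2' : Real.sqrt (f v - Real.log (1 + f v)) = -v := by linarith
  have hnn : 0 ≤ f v - Real.log (1 + f v) := by
    have := ineq3 (f v) h1 hneg.le
    nlinarith [sq_nonneg (f v)]
  have := Real.sq_sqrt hnn
  rw [h2'] at this
  refine ⟨hneg, ?_⟩
  rw [← this]; ring

lemma f_zero (ineq2 : ∀ x : ℝ, 0 ≤ x → x^2/(2*(1+x)) ≤ x - Real.log (1+x))
    (ineq3 : ∀ x : ℝ, -1 < x → x ≤ 0 → x^2/2 ≤ x - Real.log (1+x)) :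
    f 0 = 0 := by
  obtain ⟨h1, h2⟩ := hf 0
  rw [Set.mem_Ioi] at h1
  rcases lt_trichotomy (f 0) 0 with h | h | h
  · exfalso
    rw [Real.sign_of_neg h, neg_one_mul, neg_eq_zero] at h2
    have := ineq3 (f 0) h1 h.le
    have h4 : 0 < f 0 ^2/2 := by nlinarith [mul_pos (neg_pos.mpr h) (neg_pos.mpr h)]
    have hnn : 0 < f 0 - Real.log (1 + f 0) := by linarith
    rw [Real.sqrt_eq_zero hnn.le] at h2
    linarith
  · exact h
  · exfalso
    rw [Real.sign_of_pos h, one_mul] at h2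
    have := ineq2 (f 0) h.le
    have h3 : 0 < 1 + f 0 := by linarith
    have h4 : 0 < f 0^2/(2*(1+f 0)) := by positivity
    have hnn : 0 < f 0 - Real.log (1 + f 0) := by linarith
    rw [Real.sqrt_eq_zero hnn.le] at h2
    linarith

end

lemma key_arith {v a t : ℝ} (hv : 0 < v) (ha : 0 < a) (htpos : 0 < t)
    (h2a : 2*v^2 ≤ a^2) (ha2 : a^2 ≤ 2*v^2*(1+a))
    (ht2 : t^2 ≤ 2*v^2) (ht3 : 2*v^2*(1-t) ≤ t^2) :
    |v/a + v/t - Real.sqrt 2| ≤ v := by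
  obtain ⟨c, hcdef⟩ : ∃ c, c = Real.sqrt (v^2+2) := ⟨_, rfl⟩
  obtain ⟨s2, hs2def⟩ : ∃ s2, s2 = Real.sqrt 2 := ⟨_, rfl⟩
  have hc2 : c^2 = v^2+2 := by rw [hcdef]; exact Real.sq_sqrt (by positivity)
  have hcpos : 0 < c := by rw [hcdef]; exact Real.sqrt_pos.mpr (by positivity)
  have hcv : v < c := by nlinarith
  have hs2 : s2^2 = 2 := by rw [hs2def]; exact Real.sq_sqrt (by norm_num)
  have hs2pos : 0 < s2 := by rw [hs2def]; exact Real.sqrt_pos.mpr (by norm_num)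
  have hcs2 : s2 ≤ c := by rw [hs2def, hcdef]; exact Real.sqrt_le_sqrt (by nlinarith)
  have hc2v : v*c^2 = v^3+2*v := by rw [hc2]; ring
  have hc2v2 : v^2*c^2 = v^4+2*v^2 := by rw [hc2]; ring
  have hs2v : (s2*v)^2 = 2*v^2 := by rw [mul_pow, hs2]
  have hs2v2 : v*s2^2 = 2*v := by rw [hs2]; ring
  have hcub : c ≤ s2 + v := by
    nlinarith [show (0:ℝ) < c + s2 + v by positivity, mul_pos hs2pos hv]
  have ha_lb : s2 * v ≤ a := by
    nlinarith [show (0:ℝ) < s2*v + a by positivity, hs2v]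
  have ha_ub : a ≤ v^2 + v*c := by
    by_contra hcon
    push_neg at hcon
    have p1 : 0 < a - v^2 - v*c := by linarith
    have p2 : 0 < a - v^2 + v*c := by nlinarith [mul_pos hv hcpos]
    nlinarith [mul_pos p1 p2, hc2v2]
  have ht_ub : t ≤ s2 * v := by
    nlinarith [show (0:ℝ) < s2*v + t by positivity, hs2v]
  have ht_lb : v*c - v^2 ≤ t := by
    by_contra hcon
    push_neg at hcon
    have p1 : 0 < v*c - v^2 - t := by linarith
    have p2 : 0 < t + v^2 + v*c := by positivity
    nlinarith [mul_pos p1 p2, hc2v2]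
  have hA_ub : v/a ≤ s2/2 := by
    rw [div_le_iff₀ ha]
    linarith [mul_le_mul_of_nonneg_left ha_lb (by positivity : (0:ℝ) ≤ s2/2), hs2v2]
  have hA_lb : (c - v)/2 ≤ v/a := by
    rw [le_div_iff₀ ha]
    linarith [mul_le_mul_of_nonneg_left ha_ub (by linarith : (0:ℝ) ≤ (c-v)/2), hc2v]
  have hT_lb : s2/2 ≤ v/t := by
    rw [le_div_iff₀ htpos]
    linarith [mul_le_mul_of_nonneg_left ht_ub (by positivity : (0:ℝ) ≤ s2/2), hs2v2]
  have hT_ub : v/t ≤ (c+v)/2 := by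
    rw [div_le_iff₀ htpos]
    linarith [mul_le_mul_of_nonneg_left ht_lb (by positivity : (0:ℝ) ≤ (c+v)/2), hc2v]
  rw [← hs2def, abs_le]
  constructor <;> [linarith; linarith]

section
variable {f : ℝ → ℝ}
  (hf : ∀ u : ℝ, f u ∈ Set.Ioi (-1 : ℝ) ∧
      Real.sign (f u) * Real.sqrt (f u - Real.log (1 + f u)) = u)
include hf

lemma key_bound
    (ineq1 : ∀ x : ℝ, 0 ≤ x → x - Real.log (1+x) ≤ x^2/2)
    (ineq2 : ∀ x : ℝ, 0 ≤ x → x^2/(2*(1+x)) ≤ x - Real.log (1+x))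
    (ineq3 : ∀ x : ℝ, -1 < x → x ≤ 0 → x^2/2 ≤ x - Real.log (1+x))
    (ineq4 : ∀ x : ℝ, -1 < x → x ≤ 0 → x - Real.log (1+x) ≤ x^2/(2*(1+x)))
    {y : ℝ → ℝ} (hy : ∀ v : ℝ, y v = if v = 0 then Real.sqrt 2 / 2 else v / f v)
    {v : ℝ} (hv : 0 ≤ v) : |y v + y (-v) - Real.sqrt 2| ≤ v := by
  rcases eq_or_lt_of_le hv with h | h
  · subst h
    have h0 : y 0 = Real.sqrt 2 / 2 := by rw [hy 0]; simp
    rw [neg_zero, h0]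
    have : Real.sqrt 2/2 + Real.sqrt 2/2 - Real.sqrt 2 = 0 := by ring
    rw [this, abs_zero]
  · have hvne : v ≠ 0 := ne_of_gt h
    have hnvne : -v ≠ 0 := by simpa using hvne
    obtain ⟨ha, hga⟩ := f_pos_facts hf ineq2 h
    obtain ⟨hbneg, hgb⟩ := f_neg_facts hf ineq3 (by linarith : -v < 0)
    have hb1 : (-1:ℝ) < f (-v) := (hf (-v)).1
    have hgb' : f (-v) - Real.log (1 + f (-v)) = v^2 := by rw [hgb]; ring
    have h1a : 0 < 1 + f v := by linarith
    have h1b : 0 < 1 + f (-v) := by linarith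
    -- the four polynomial inequalities
    have h2a : 2*v^2 ≤ (f v)^2 := by
      have := ineq1 (f v) ha.le
      linarith
    have ha2 : (f v)^2 ≤ 2*v^2*(1 + f v) := by
      have h2 := ineq2 (f v) ha.le
      rw [div_le_iff₀ (by linarith : (0:ℝ) < 2*(1 + f v))] at h2
      nlinarith
    have ht2 : (-(f (-v)))^2 ≤ 2*v^2 := by
      have := ineq3 (f (-v)) hb1 hbneg.le
      nlinarith
    have ht3 : 2*v^2*(1 - (-(f (-v)))) ≤ (-(f (-v)))^2 := by
      have h2 := ineq4 (f (-v)) hb1 hbneg.le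
      rw [le_div_iff₀ (by linarith : (0:ℝ) < 2*(1 + f (-v)))] at h2
      nlinarith
    have hkey := key_arith h ha (by linarith : 0 < -(f (-v))) h2a ha2 ht2 ht3
    have hyv : y v = v / f v := by rw [hy v, if_neg hvne]
    have hynv : y (-v) = v / (-(f (-v))) := by
      rw [hy (-v), if_neg hnvne]; ring
    rw [hyv, hynv]
    exact hkey
end

lemma ineq1' {x : ℝ} (hx : 0 ≤ x) : x - Real.log (1+x) ≤ x^2/2 := by
  have h := monoA (by norm_num : (0:ℝ) ∈ Set.Ioi (-1:ℝ))
    (by simp only [Set.mem_Ioi]; linarith : x ∈ Set.Ioi (-1:ℝ)) hx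
  simp only [add_zero, Real.log_one] at h
  norm_num at h
  linarith

lemma ineq2' {x : ℝ} (hx : 0 ≤ x) : x^2/(2*(1+x)) ≤ x - Real.log (1+x) := by
  have h := monoB (by norm_num : (0:ℝ) ∈ Set.Ioi (-1:ℝ))
    (by simp only [Set.mem_Ioi]; linarith : x ∈ Set.Ioi (-1:ℝ)) hx
  simp only [add_zero, Real.log_one] at h
  norm_num at h
  linarith

lemma ineq3' {x : ℝ} (hx1 : -1 < x) (hx : x ≤ 0) : x^2/2 ≤ x - Real.log (1+x) := by
  have h := monoA (Set.mem_Ioi.mpr hx1) (by norm_num : (0:ℝ) ∈ Set.Ioi (-1:ℝ)) hx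
  simp only [add_zero, Real.log_one] at h
  norm_num at h
  linarith

lemma ineq4' {x : ℝ} (hx1 : -1 < x) (hx : x ≤ 0) : x - Real.log (1+x) ≤ x^2/(2*(1+x)) := by
  have h := monoB (Set.mem_Ioi.mpr hx1) (by norm_num : (0:ℝ) ∈ Set.Ioi (-1:ℝ)) hx
  simp only [add_zero, Real.log_one] at h
  norm_num at h
  linarith

lemma hdG {x : ℝ} (hx : -1 < x) :
    HasDerivAt (fun x : ℝ => x - Real.log (1+x)) (x/(1+x)) x := by
  have h1 : (0:ℝ) < 1 + x := by linarith
  have hlog : HasDerivAt (fun x : ℝ => Real.log (1+x)) (1/(1+x)) x := by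
    simpa using ((hasDerivAt_id x).const_add 1).log (ne_of_gt h1)
  have h := (hasDerivAt_id x).sub hlog
  refine h.congr_deriv ?_
  field_simp
  ring

lemma monoG : MonotoneOn (fun x : ℝ => x - Real.log (1+x)) (Set.Ici (0:ℝ)) := by
  apply monotoneOn_of_deriv_nonneg (convex_Ici _)
  · intro x hx
    exact ((hdG (by simp at hx; linarith)).differentiableAt.continuousAt).continuousWithinAt
  · intro x hx
    rw [interior_Ici] at hx
    exact (hdG (by simp at hx; linarith)).differentiableAt.differentiableWithinAt
  · intro x hx
    rw [interior_Ici] at hx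
    have hx' : (0:ℝ) < x := hx
    rw [(hdG (by linarith)).deriv]
    positivity

lemma antiG : AntitoneOn (fun x : ℝ => x - Real.log (1+x)) (Set.Ioc (-1:ℝ) 0) := by
  apply antitoneOn_of_deriv_nonpos (convex_Ioc _ _)
  · intro x hx
    exact ((hdG hx.1).differentiableAt.continuousAt).continuousWithinAt
  · intro x hx
    rw [interior_Ioc] at hx
    exact (hdG hx.1).differentiableAt.differentiableWithinAt
  · intro x hx
    rw [interior_Ioc] at hx
    rw [(hdG hx.1).deriv]
    apply div_nonpos_of_nonpos_of_nonneg
    · linarith [hx.2]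
    · linarith [hx.1]

section
variable {f : ℝ → ℝ}
  (hf : ∀ u : ℝ, f u ∈ Set.Ioi (-1 : ℝ) ∧
      Real.sign (f u) * Real.sqrt (f u - Real.log (1 + f u)) = u)
include hf

lemma f_mono : Monotone f := by
  intro u₁ u₂ h12
  rcases eq_or_lt_of_le h12 with h | h12'
  · rw [h]
  have hz := f_zero hf (fun x hx => ineq2' hx) (fun x h1 h2 => ineq3' h1 h2)
  rcases lt_trichotomy u₁ 0 with h1 | h1 | h1
  · rcases lt_trichotomy u₂ 0 with h2 | h2 | h2
    · obtain ⟨hn1, hg1⟩ := f_neg_facts hf (fun x ha hb => ineq3' ha hb) h1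
      obtain ⟨hn2, hg2⟩ := f_neg_facts hf (fun x ha hb => ineq3' ha hb) h2
      by_contra hcon
      push_neg at hcon
      have hmem1 : f u₁ ∈ Set.Ioc (-1:ℝ) 0 := ⟨(hf u₁).1, hn1.le⟩
      have hmem2 : f u₂ ∈ Set.Ioc (-1:ℝ) 0 := ⟨(hf u₂).1, hn2.le⟩
      have := antiG hmem2 hmem1 hcon.le
      simp only at this
      rw [hg1, hg2] at this
      nlinarith
    · subst h2
      rw [hz]
      exact (f_neg_facts hf (fun x ha hb => ineq3' ha hb) h1).1.le
    · exact le_trans (f_neg_facts hf (fun x ha hb => ineq3' ha hb) h1).1.le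
        (f_pos_facts hf (fun x hx => ineq2' hx) h2).1.le
  · subst h1
    rw [hz]
    exact (f_pos_facts hf (fun x hx => ineq2' hx) h12').1.le
  · have h2 : 0 < u₂ := lt_trans h1 h12'
    obtain ⟨hp1, hg1⟩ := f_pos_facts hf (fun x hx => ineq2' hx) h1
    obtain ⟨hp2, hg2⟩ := f_pos_facts hf (fun x hx => ineq2' hx) h2
    by_contra hcon
    push_neg at hcon
    have := monoG (Set.mem_Ici.mpr hp2.le) (Set.mem_Ici.mpr hp1.le) hcon.le
    simp only at this
    rw [hg1, hg2] at this
    nlinarith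
end

lemma sqrt_tendsto_atTop' : Tendsto Real.sqrt atTop atTop := by
  apply tendsto_atTop_atTop.mpr
  intro b
  refine ⟨max (b^2) 0, fun s hs => ?_⟩
  calc b ≤ |b| := le_abs_self b
    _ = Real.sqrt (b^2) := (Real.sqrt_sq_eq_abs b).symm
    _ ≤ Real.sqrt s := Real.sqrt_le_sqrt (le_trans (le_max_left _ _) hs)

theorem stmt_8 (f : ℝ → ℝ)
    (hf : ∀ u : ℝ, f u ∈ Set.Ioi (-1 : ℝ) ∧
      Real.sign (f u) * Real.sqrt (f u - Real.log (1 + f u)) = u)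
    (y : ℝ → ℝ)
    (hy : ∀ v : ℝ, y v = if v = 0 then Real.sqrt 2 / 2 else v / f v) :
    Filter.Tendsto
      (fun s : ℝ => ∫ u in Set.Ioi (0 : ℝ),
        2 * (y (u / Real.sqrt s) + y (-(u / Real.sqrt s))) * Real.exp (-u ^ 2))
      Filter.atTop (nhds (Real.sqrt (2 * Real.pi))) := by
  have key : ∀ v : ℝ, 0 ≤ v → |y v + y (-v) - Real.sqrt 2| ≤ v :=
    fun v hv => key_bound hf (fun x hx => ineq1' hx) (fun x hx => ineq2' hx)
      (fun x ha hb => ineq3' ha hb) (fun x ha hb => ineq4' ha hb) hy hv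
  have hym : Measurable y := by
    have hfm : Measurable f := (f_mono hf).measurable
    have : y = fun v => if v = 0 then Real.sqrt 2 / 2 else v / f v := funext hy
    rw [this]
    exact Measurable.ite (by simpa using measurableSet_singleton (0:ℝ))
      measurable_const (measurable_id.div hfm)
  have hexpm : Measurable fun u : ℝ => Real.exp (-u^2) :=
    (Real.continuous_exp.comp (Continuous.neg (continuous_pow 2))).measurable
  -- dominated convergence
  have hval : ∫ u in Set.Ioi (0:ℝ), (2*Real.sqrt 2) * Real.exp (-u^2) = Real.sqrt (2*Real.pi) := by
    rw [MeasureTheory.integral_const_mul]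
    have hg : ∫ u in Set.Ioi (0:ℝ), Real.exp (-u^2) = Real.sqrt Real.pi / 2 := by
      have := integral_gaussian_Ioi 1
      simpa using this
    rw [hg, show Real.sqrt (2*Real.pi) = Real.sqrt 2 * Real.sqrt Real.pi from
      Real.sqrt_mul (by norm_num) _]
    ring
  rw [← hval]
  apply MeasureTheory.tendsto_integral_filter_of_dominated_convergence
    (fun u => 2*(Real.sqrt 2 + u)*Real.exp (-u^2))
  · -- measurability
    apply Eventually.of_forall
    intro s
    have m1 : Measurable fun u : ℝ => u / Real.sqrt s := measurable_id.div_const _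
    exact ((measurable_const.mul ((hym.comp m1).add (hym.comp m1.neg))).mul hexpm).aestronglyMeasurable
  · -- bound
    filter_upwards [eventually_ge_atTop (1:ℝ)] with s hs
    rw [MeasureTheory.ae_restrict_iff' measurableSet_Ioi]
    apply MeasureTheory.ae_of_all
    intro u hu
    have hu0 : 0 < u := hu
    have hsq : 1 ≤ Real.sqrt s := Real.one_le_sqrt.mpr hs
    have hv0 : 0 ≤ u / Real.sqrt s := div_nonneg hu0.le (by linarith)
    have hvu : u / Real.sqrt s ≤ u := div_le_self hu0.le hsq
    have hk := key _ hv0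
    have habs : |y (u/Real.sqrt s) + y (-(u/Real.sqrt s))| ≤ Real.sqrt 2 + u := by
      have h1 := abs_le.mp hk
      rw [abs_le]
      constructor <;> nlinarith [Real.sqrt_nonneg 2]
    rw [Real.norm_eq_abs, abs_mul, abs_mul, abs_two, abs_of_nonneg (Real.exp_pos _).le]
    gcongr
  · -- integrability of the bound
    have h1 : MeasureTheory.Integrable (fun u : ℝ => Real.exp (-(1:ℝ) * u^2)) :=
      integrable_exp_neg_mul_sq one_pos
    have h2 : MeasureTheory.Integrable (fun u : ℝ => u * Real.exp (-(1:ℝ) * u^2)) :=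
      integrable_mul_exp_neg_mul_sq one_pos
    have h3 : MeasureTheory.Integrable (fun u : ℝ => 2*(Real.sqrt 2 + u)*Real.exp (-u^2)) := by
      have h4 := (h1.const_mul (2*Real.sqrt 2)).add (h2.const_mul 2)
      have heq : (fun u : ℝ => 2*(Real.sqrt 2 + u)*Real.exp (-u^2))
          = fun u => 2*Real.sqrt 2*Real.exp (-(1:ℝ)*u^2) + 2*(u*Real.exp (-(1:ℝ)*u^2)) := by
        funext u
        rw [neg_one_mul]
        ring
      rw [heq]
      exact h4
    exact h3.restrict
  · -- pointwise limit
    rw [MeasureTheory.ae_restrict_iff' measurableSet_Ioi]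
    apply MeasureTheory.ae_of_all
    intro u hu
    have hu0 : 0 < u := hu
    have h1 : Tendsto (fun s : ℝ => u / Real.sqrt s) atTop (𝓝 0) := by
      have hinv : Tendsto (fun s : ℝ => (Real.sqrt s)⁻¹) atTop (𝓝 0) :=
        Tendsto.inv_tendsto_atTop sqrt_tendsto_atTop'
      have := hinv.const_mul u
      simpa [div_eq_mul_inv] using this
    have h2 : Tendsto (fun s : ℝ => y (u/Real.sqrt s) + y (-(u/Real.sqrt s)))
        atTop (𝓝 (Real.sqrt 2)) := by
      have hb : ∀ᶠ s in (atTop : Filter ℝ),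
          ‖(y (u/Real.sqrt s) + y (-(u/Real.sqrt s))) - Real.sqrt 2‖ ≤ u/Real.sqrt s := by
        apply Eventually.of_forall
        intro s
        exact key _ (div_nonneg hu0.le (Real.sqrt_nonneg s))
      have h3 := squeeze_zero_norm' hb h1
      have h4 := h3.add_const (Real.sqrt 2)
      simpa using h4
    exact (h2.const_mul 2).mul_const _
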